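/- arXiv:1302.2341 — 3 statements merged into one kernel-verified Lean document; each statement's English description precedes it below -/
import Mathlib

section
/- For all absolutely continuous curves α, β:[0,1]→ℝ^d, the associated measures satisfy ‖μ_α − μ_β‖_w ≤ ‖α − β‖_AC, i.e. for every Lipschitz function f:P^{d-1}→ℝ with ‖f‖_𝓛 ≤ 1 one has |∫ f dμ_α − ∫ f dμ_β| ≤ ∫_0^1 |α'(t) − β'(t)| dt. -/
open MeasureTheory Set
open scoped RealInnerProductSpace ENNReal NNReal

noncomputable section

/-- Euclidean space `ℝ^d`. -/
abbrev Euc (d : ℕ) : Type := EuclideanSpace ℝ (Fin d)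

/-- The unit sphere `S^{d-1}` in `ℝ^d`. -/
abbrev Sph (d : ℕ) : Type := Metric.sphere (0 : Euc d) 1

/-- The antipodal equivalence relation on the sphere. -/
def projRel (d : ℕ) : Setoid (Sph d) where
  r x y := (x : Euc d) = (y : Euc d) ∨ (x : Euc d) = -(y : Euc d)
  iseqv := by
    refine ⟨fun x => Or.inl rfl, ?_, ?_⟩
    · rintro x y (h | h)
      · exact Or.inl h.symm
      · exact Or.inr (by rw [h, neg_neg])
    · rintro x y z (h1 | h1) (h2 | h2)
      · exact Or.inl (h1.trans h2)
      · exact Or.inr (h1.trans h2)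
      · exact Or.inr (by rw [h1, h2])
      · exact Or.inl (by rw [h1, h2, neg_neg])

/-- Real projective space `P^{d-1}`, as the quotient of the sphere identifying
antipodal points. -/
abbrev Proj (d : ℕ) : Type := Quotient (projRel d)

/-- The projection `π : S^{d-1} → P^{d-1}`. -/
def projQ {d : ℕ} (x : Sph d) : Proj d := Quotient.mk (projRel d) x

/-- The unit vector in the direction of a nonzero vector `v`. -/
def unitize {d : ℕ} (v : Euc d) (hv : v ≠ 0) : Sph d :=
  ⟨‖v‖⁻¹ • v, by
    rw [mem_sphere_zero_iff_norm, norm_smul, norm_inv, norm_norm,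
      inv_mul_cancel₀ (norm_ne_zero_iff.mpr hv)]⟩

/-- The degree-1 homogeneous extension `f̂ : ℝ^d → ℝ` of a function
`f : P^{d-1} → ℝ`, determined by `f̂(rξ) = |r| f(π ξ)` for `ξ` on the sphere. -/
def hext {d : ℕ} (f : Proj d → ℝ) (v : Euc d) : ℝ :=
  haveI := Classical.propDecidable (v = 0)
  if hv : v = 0 then 0 else ‖v‖ * f (projQ (unitize v hv))

/-- `IsACDeriv α g` : the curve `α` is absolutely continuous on `[0,1]`
with (a.e.) derivative `g`, i.e. `α` is the indefinite integral of the
integrable function `g`. -/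
def IsACDeriv {V : Type*} [NormedAddCommGroup V] [NormedSpace ℝ V]
    (α g : ℝ → V) : Prop :=
  IntervalIntegrable g volume 0 1 ∧
  ∀ t ∈ Icc (0:ℝ) 1, α t = α 0 + ∫ s in (0:ℝ)..t, g s

/-- `IsCurveMeasure g μ` : `μ` is the measure on projective space associated
(via the Riesz representation) to a curve with derivative `g`; it is the finite
Borel measure satisfying `∫ f dμ = ∫_0^1 f̂(g t) dt` for all continuous `f`. -/
def IsCurveMeasure {d : ℕ} (g : ℝ → Euc d) (μ : Measure (Proj d)) : Prop :=
  IsFiniteMeasure μ ∧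
  ∀ f : Proj d → ℝ, Continuous f → ∫ x, f x ∂μ = ∫ t in (0:ℝ)..1, hext f (g t)

lemma minNorm_neg_right {d : ℕ} (x y : Euc d) :
    min ‖x - -y‖ ‖x + -y‖ = min ‖x - y‖ ‖x + y‖ := by
  rw [sub_neg_eq_add, ← sub_eq_add_neg, min_comm]

lemma minNorm_neg_left {d : ℕ} (x y : Euc d) :
    min ‖-x - y‖ ‖-x + y‖ = min ‖x - y‖ ‖x + y‖ := by
  have h1 : -x - y = -(x + y) := by abel
  have h2 : -x + y = -(x - y) := by abel
  rw [h1, h2, norm_neg, norm_neg, min_comm]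

/-- The metric `d_P` on projective space: `d_P(x,y)` is the (Euclidean) distance
between the antipodal pairs `π⁻¹(x)` and `π⁻¹(y)` on the sphere. -/
def dProj {d : ℕ} : Proj d → Proj d → ℝ :=
  Quotient.lift₂ (fun x y : Sph d => min ‖(x : Euc d) - y‖ ‖(x : Euc d) + y‖)
    (by
      rintro x y x' y' (hx | hx) (hy | hy) <;> beta_reduce <;>
        simp only [hx, hy, minNorm_neg_right, minNorm_neg_left])

/-- `LipTest f B L` : the function `f : P^{d-1} → ℝ` is bounded by `B` and
Lipschitz with constant `L` for the metric `d_P`; in this case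
`‖f‖_𝓛 = ‖f‖_∞ + Lip(f) ≤ B + L`. -/
def LipTest {d : ℕ} (f : Proj d → ℝ) (B L : ℝ) : Prop :=
  0 ≤ L ∧ (∀ x, |f x| ≤ B) ∧ ∀ x y, |f x - f y| ≤ L * dProj x y


lemma unit_scale_ineq {d : ℕ} (a b : Euc d) (ha : ‖a‖ = 1) (hb : ‖b‖ = 1)
    (r s : ℝ) (hs : 0 ≤ s) (hrs : s ≤ r) :
    s * ‖a - b‖ ≤ ‖r • a - s • b‖ := by
  have hcs : ⟪a, b⟫ ≤ 1 := by
    have := real_inner_le_norm a b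
    rwa [ha, hb, one_mul] at this
  have e1 : ‖a - b‖ ^ 2 = 2 - 2 * ⟪a, b⟫ := by
    rw [norm_sub_sq_real, ha, hb]; ring
  have e2 : ‖r • a - s • b‖ ^ 2 = r^2 - 2 * (r * s) * ⟪a, b⟫ + s^2 := by
    rw [norm_sub_sq_real, real_inner_smul_left, real_inner_smul_right,
      norm_smul, norm_smul, ha, hb, Real.norm_eq_abs, Real.norm_eq_abs,
      mul_one, mul_one, sq_abs, sq_abs]
    ring
  have hsq : (s * ‖a - b‖)^2 ≤ ‖r • a - s • b‖ ^ 2 := by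
    rw [mul_pow, e1, e2]
    nlinarith [sq_nonneg (r - s), mul_le_mul_of_nonneg_left hcs
      (mul_nonneg (mul_nonneg (by norm_num : (0:ℝ) ≤ 2) hs) (sub_nonneg.mpr hrs))]
  exact (pow_le_pow_iff_left₀ (mul_nonneg hs (norm_nonneg _)) (norm_nonneg _)
    two_ne_zero).mp hsq

lemma dProj_mk {d : ℕ} (x y : Sph d) :
    dProj (projQ x) (projQ y) = min ‖(x : Euc d) - y‖ ‖(x : Euc d) + y‖ := rfl

lemma hext_zero {d : ℕ} (f : Proj d → ℝ) : hext f 0 = 0 := by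
  simp [hext]

lemma hext_ne {d : ℕ} (f : Proj d → ℝ) (v : Euc d) (hv : v ≠ 0) :
    hext f v = ‖v‖ * f (projQ (unitize v hv)) := by
  simp [hext, hv]

/-- Key pointwise estimate, asymmetric version: assuming `‖w‖ ≤ ‖v‖`. -/
lemma hext_diff_le_aux {d : ℕ} (f : Proj d → ℝ) (B L : ℝ) (hf : LipTest f B L)
    (hB : 0 ≤ B) (v w : Euc d) (hvw : ‖w‖ ≤ ‖v‖) :
    |hext f v - hext f w| ≤ (B + L) * ‖v - w‖ := by
  obtain ⟨hL, hfB, hfL⟩ := hf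
  by_cases hv : v = 0
  · have hw : w = 0 := by
      have : ‖w‖ ≤ 0 := by simpa [hv] using hvw
      exact norm_eq_zero.mp (le_antisymm this (norm_nonneg _))
    simp [hv, hw, hext_zero]
  by_cases hw : w = 0
  · rw [hext_ne f v hv, hw, hext_zero, sub_zero, abs_mul, abs_norm, sub_zero]
    calc ‖v‖ * |f (projQ (unitize v hv))| ≤ ‖v‖ * B :=
          mul_le_mul_of_nonneg_left (hfB _) (norm_nonneg _)
      _ ≤ (B + L) * ‖v‖ := by nlinarith [norm_nonneg v]
  · rw [hext_ne f v hv, hext_ne f w hw]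
    set a := projQ (unitize v hv)
    set b := projQ (unitize w hw)
    have key : ‖w‖ * dProj a b ≤ ‖v - w‖ := by
      have h1 : dProj a b ≤ ‖(‖v‖⁻¹ • v) - (‖w‖⁻¹ • w)‖ := min_le_left _ _
      have hnv : ‖(‖v‖⁻¹ • v : Euc d)‖ = 1 := mem_sphere_zero_iff_norm.mp (unitize v hv).2
      have hnw : ‖(‖w‖⁻¹ • w : Euc d)‖ = 1 := mem_sphere_zero_iff_norm.mp (unitize w hw).2
      have h2 : ‖w‖ * ‖(‖v‖⁻¹ • v) - (‖w‖⁻¹ • w)‖ ≤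
          ‖‖v‖ • (‖v‖⁻¹ • v : Euc d) - ‖w‖ • (‖w‖⁻¹ • w : Euc d)‖ :=
        unit_scale_ineq _ _ hnv hnw ‖v‖ ‖w‖ (norm_nonneg w) hvw
      have h3 : ‖v‖ • (‖v‖⁻¹ • v) = v := smul_inv_smul₀ (norm_ne_zero_iff.mpr hv) v
      have h4 : ‖w‖ • (‖w‖⁻¹ • w) = w := smul_inv_smul₀ (norm_ne_zero_iff.mpr hw) w
      calc ‖w‖ * dProj a b ≤ ‖w‖ * ‖(‖v‖⁻¹ • v) - (‖w‖⁻¹ • w)‖ :=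
            mul_le_mul_of_nonneg_left h1 (norm_nonneg _)
        _ ≤ ‖‖v‖ • (‖v‖⁻¹ • v : Euc d) - ‖w‖ • (‖w‖⁻¹ • w : Euc d)‖ := h2
        _ = ‖v - w‖ := by rw [h3, h4]
    have e : ‖v‖ * f a - ‖w‖ * f b = (‖v‖ - ‖w‖) * f a + ‖w‖ * (f a - f b) := by
      ring
    rw [e]
    calc |(‖v‖ - ‖w‖) * f a + ‖w‖ * (f a - f b)|
        ≤ |(‖v‖ - ‖w‖) * f a| + |‖w‖ * (f a - f b)| := abs_add_le _ _
      _ = |‖v‖ - ‖w‖| * |f a| + ‖w‖ * |f a - f b| := by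
          rw [abs_mul, abs_mul, abs_norm]
      _ ≤ ‖v - w‖ * B + ‖w‖ * (L * dProj a b) :=
          add_le_add
            (mul_le_mul (abs_norm_sub_norm_le v w) (hfB a) (abs_nonneg _) (norm_nonneg _))
            (mul_le_mul_of_nonneg_left (hfL a b) (norm_nonneg _))
      _ ≤ B * ‖v - w‖ + L * ‖v - w‖ := by
          have : ‖w‖ * (L * dProj a b) = L * (‖w‖ * dProj a b) := by ring
          rw [this]
          have h5 : L * (‖w‖ * dProj a b) ≤ L * ‖v - w‖ :=
            mul_le_mul_of_nonneg_left key hL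
          linarith
      _ = (B + L) * ‖v - w‖ := by ring

lemma hext_diff_le {d : ℕ} (f : Proj d → ℝ) (B L : ℝ) (hf : LipTest f B L)
    (hB : 0 ≤ B) (v w : Euc d) :
    |hext f v - hext f w| ≤ (B + L) * ‖v - w‖ := by
  rcases le_total ‖w‖ ‖v‖ with h | h
  · exact hext_diff_le_aux f B L hf hB v w h
  · rw [abs_sub_comm, ← norm_sub_rev]
    exact hext_diff_le_aux f B L hf hB w v h

lemma lipTest_continuous {d : ℕ} (f : Proj d → ℝ) (B L : ℝ) (hf : LipTest f B L) :
    Continuous f := by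
  obtain ⟨hL, hfB, hfL⟩ := hf
  have hq : Topology.IsQuotientMap (Quotient.mk (projRel d)) := isQuotientMap_quot_mk
  rw [hq.continuous_iff]
  have : LipschitzWith ⟨L, hL⟩ (fun x : Sph d => f (projQ x)) := by
    apply LipschitzWith.of_dist_le_mul
    intro x y
    have h1 : dist (f (projQ x)) (f (projQ y)) = |f (projQ x) - f (projQ y)| :=
      Real.dist_eq _ _
    have h2 : dProj (projQ x) (projQ y) ≤ dist x y := by
      rw [dProj_mk, Subtype.dist_eq, dist_eq_norm]
      exact min_le_left _ _
    calc dist (f (projQ x)) (f (projQ y)) ≤ L * dProj (projQ x) (projQ y) := by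
          rw [h1]; exact hfL _ _
      _ ≤ L * dist x y := mul_le_mul_of_nonneg_left h2 hL
  exact this.continuous

lemma hext_continuous {d : ℕ} (f : Proj d → ℝ) (B L : ℝ) (hf : LipTest f B L)
    (hB : 0 ≤ B) : Continuous (hext f) := by
  have : LipschitzWith ⟨B + L, add_nonneg hB hf.1⟩ (hext f) := by
    apply LipschitzWith.of_dist_le_mul
    intro x y
    rw [Real.dist_eq, dist_eq_norm]
    exact hext_diff_le f B L hf hB x y
  exact this.continuous


lemma hext_intervalIntegrable {d : ℕ} (f : Proj d → ℝ) (B L : ℝ) (hf : LipTest f B L)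
    (hB : 0 ≤ B) (hBL : B + L ≤ 1) (g : ℝ → Euc d)
    (hg : IntervalIntegrable g volume 0 1) :
    IntervalIntegrable (fun t => hext f (g t)) volume 0 1 := by
  have hg' : IntegrableOn g (Set.uIoc (0:ℝ) 1) volume := intervalIntegrable_iff.mp hg
  rw [intervalIntegrable_iff]
  apply Integrable.mono hg'.norm
    ((hext_continuous f B L hf hB).comp_aestronglyMeasurable hg'.1)
  filter_upwards with t
  rw [Real.norm_eq_abs, norm_norm]
  have h := hext_diff_le f B L hf hB (g t) 0
  rw [hext_zero, sub_zero, sub_zero] at h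
  nlinarith [norm_nonneg (g t), abs_nonneg (hext f (g t))]

/-- For all absolutely continuous curves `α, β : [0,1] → ℝ^d`,
the associated measures satisfy `‖μ_α − μ_β‖_w ≤ ‖α − β‖_AC`: for every
Lipschitz `f : P^{d-1} → ℝ` with `‖f‖_𝓛 ≤ 1` one has
`|∫ f dμ_α − ∫ f dμ_β| ≤ ∫_0^1 |α'(t) − β'(t)| dt`. -/
theorem stmt4 {d : ℕ} (hd : 1 ≤ d) (α gα β gβ : ℝ → Euc d)
    (hα : IsACDeriv α gα) (hβ : IsACDeriv β gβ)
    (μα μβ : Measure (Proj d))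
    (hμα : IsCurveMeasure gα μα) (hμβ : IsCurveMeasure gβ μβ)
    (f : Proj d → ℝ) (B L : ℝ) (hf : LipTest f B L) (hBL : B + L ≤ 1) :
    |(∫ x, f x ∂μα) - ∫ x, f x ∂μβ| ≤ ∫ t in (0:ℝ)..1, ‖gα t - gβ t‖ := by
  have hB : 0 ≤ B := by
    have hme : (EuclideanSpace.single (⟨0, hd⟩ : Fin d) (1:ℝ)) ∈
        Metric.sphere (0 : Euc d) 1 := by
      rw [mem_sphere_zero_iff_norm, EuclideanSpace.norm_single]; norm_num
    exact (abs_nonneg _).trans (hf.2.1 (projQ ⟨_, hme⟩))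
  have hcf : Continuous f := lipTest_continuous f B L hf
  have iα : IntervalIntegrable (fun t => hext f (gα t)) volume 0 1 :=
    hext_intervalIntegrable f B L hf hB hBL gα hα.1
  have iβ : IntervalIntegrable (fun t => hext f (gβ t)) volume 0 1 :=
    hext_intervalIntegrable f B L hf hB hBL gβ hβ.1
  rw [hμα.2 f hcf, hμβ.2 f hcf, ← intervalIntegral.integral_sub iα iβ]
  have h01 : (0:ℝ) ≤ 1 := zero_le_one
  calc |∫ t in (0:ℝ)..1, (hext f (gα t) - hext f (gβ t))|
      ≤ ∫ t in (0:ℝ)..1, |hext f (gα t) - hext f (gβ t)| := by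
        have := intervalIntegral.norm_integral_le_integral_norm
          (μ := volume) (f := fun t => hext f (gα t) - hext f (gβ t)) h01
        simpa [Real.norm_eq_abs] using this
    _ ≤ ∫ t in (0:ℝ)..1, ‖gα t - gβ t‖ := by
        apply intervalIntegral.integral_mono_on h01 (iα.sub iβ).abs
          (hα.1.sub hβ.1).norm
        intro t _
        have h := hext_diff_le f B L hf hB (gα t) (gβ t)
        nlinarith [norm_nonneg (gα t - gβ t)]
end
end

section
/- The correspondence α ↦ μ_α is surjective onto the set of positive finite Borel measures on P^{d-1}: for every positive finite Borel measure μ on P^{d-1} there exists an absolutely continuous curve α:[0,1]→ℝ^d with μ_α = μ. -/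
open MeasureTheory Set
open scoped RealInnerProductSpace ENNReal NNReal

noncomputable section

section Aux
open Filter ProbabilityTheory
open scoped Topology

def hemi (d : ℕ) : Set (Euc d) := ⋃ i : Fin d, {x | (∀ j, j < i → x j = 0) ∧ 0 < x i}

lemma measurableSet_hemi (d : ℕ) : MeasurableSet (hemi d) := by
  refine MeasurableSet.iUnion fun i => ?_
  have hm : ∀ j : Fin d, Measurable fun x : Euc d => x j := fun j =>
    (EuclideanSpace.proj (𝕜 := ℝ) j).continuous.measurable
  have h1 : MeasurableSet {x : Euc d | ∀ j, j < i → x j = 0} := by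
    have : {x : Euc d | ∀ j, j < i → x j = 0} = ⋂ j ∈ {j | j < i}, {x : Euc d | x j = 0} := by
      ext x; simp [Set.mem_iInter]
    rw [this]
    exact MeasurableSet.biInter (Set.to_countable _)
      (fun j _ => measurableSet_eq_fun (hm j) measurable_const)
  have h2 : MeasurableSet {x : Euc d | 0 < x i} :=
    measurableSet_lt measurable_const (hm i)
  exact h1.inter h2

lemma hemi_excl {d : ℕ} {x : Euc d} (h1 : x ∈ hemi d) (h2 : -x ∈ hemi d) : False := by
  obtain ⟨_, ⟨i, rfl⟩, hi⟩ := h1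
  obtain ⟨_, ⟨k, rfl⟩, hk⟩ := h2
  obtain ⟨hiz, hip⟩ := hi
  obtain ⟨hkz, hkp⟩ := hk
  simp only [Set.mem_setOf_eq] at *
  rcases lt_trichotomy i k with h | h | h
  · have := hkz i h; simp at this; linarith [hip, this]
  · subst h; have : (-x) i = -(x i) := rfl; rw [this] at hkp; linarith
  · have := hiz k h; have hx : (-x) k = -(x k) := rfl; rw [hx, this] at hkp; linarith

lemma hemi_total {d : ℕ} {x : Euc d} (hx : x ≠ 0) : x ∈ hemi d ∨ -x ∈ hemi d := by
  have hex : ∃ i, x i ≠ 0 := by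
    by_contra h
    push_neg at h
    exact hx (by ext i; simpa using h i)
  classical
  obtain ⟨i, hi, hmin⟩ := Finset.exists_min_image (Finset.univ.filter fun i => x i ≠ 0)
    id ⟨hex.choose, by simp [hex.choose_spec]⟩
  simp only [Finset.mem_filter, Finset.mem_univ, true_and] at hi hmin
  have hz : ∀ j, j < i → x j = 0 := by
    intro j hj
    by_contra hjz
    exact absurd (hmin j (by simp [hjz])) (by simp; exact hj)
  rcases lt_or_gt_of_ne hi with hneg | hpos
  · right
    exact Set.mem_iUnion.2 ⟨i, ⟨fun j hj => by simp [hz j hj], by simpa using hneg⟩⟩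
  · left
    exact Set.mem_iUnion.2 ⟨i, hz, hpos⟩

def negS {d : ℕ} (x : Sph d) : Sph d :=
  ⟨-(x : Euc d), by
    have := x.2
    simp only [mem_sphere_iff_norm, sub_zero] at this ⊢
    simpa using this⟩

lemma sph_ne_zero {d : ℕ} (x : Sph d) : (x : Euc d) ≠ 0 := by
  have := x.2
  simp only [mem_sphere_iff_norm, sub_zero] at this
  intro h; rw [h] at this; simp at this

open Classical in
def sel {d : ℕ} (x : Sph d) : Sph d := if (x : Euc d) ∈ hemi d then x else negS x

lemma measurable_sel {d : ℕ} : Measurable (sel (d := d)) := by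
  classical
  have hs : MeasurableSet {x : Sph d | (x : Euc d) ∈ hemi d} :=
    measurable_subtype_coe (measurableSet_hemi d)
  exact Measurable.ite hs measurable_id
    ((measurable_subtype_coe.neg).subtype_mk)

lemma sel_resp {d : ℕ} (a b : Sph d) (h : (projRel d).r a b) : sel a = sel b := by
  classical
  rcases h with h | h
  · congr 1; exact Subtype.ext h
  · have hb := sph_ne_zero b
    unfold sel
    by_cases hB : (b : Euc d) ∈ hemi d
    · have hA : (a : Euc d) ∉ hemi d := by
        rw [h]; intro hc; exact hemi_excl hB (by simpa using hc)
      rw [if_neg hA, if_pos hB]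
      exact Subtype.ext (by simp [negS, h])
    · have hA : (a : Euc d) ∈ hemi d := by
        rw [h]; rcases hemi_total hb with h' | h'
        · exact absurd h' hB
        · exact h'
      rw [if_pos hA, if_neg hB]
      exact Subtype.ext (by simp [negS, h])

def secP {d : ℕ} : Proj d → Sph d := Quotient.lift sel sel_resp

lemma measurable_secP {d : ℕ} : Measurable (secP (d := d)) :=
  measurable_from_quotient.2 (by
    have : (secP (d := d)) ∘ Quotient.mk'' = sel := rfl
    rw [this]; exact measurable_sel)

lemma projQ_secP {d : ℕ} (p : Proj d) : projQ (secP p) = p := by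
  induction p using Quotient.ind with
  | _ x =>
    show projQ (sel x) = Quotient.mk _ x
    classical
    unfold sel
    split
    · rfl
    · exact Quotient.sound (Or.inr (by simp [negS]))

lemma exists_push (X : Type*) [MeasurableSpace X] [StandardBorelSpace X] [Nonempty X]
    (ν : Measure X) [IsProbabilityMeasure ν] :
    ∃ φ : ℝ → X, Measurable φ ∧ Measure.map φ (volume.restrict (Set.Ioo 0 1)) = ν := by
  classical
  obtain ⟨s, hs, ⟨e⟩⟩ := MeasureTheory.exists_subset_real_measurableEquiv X
  obtain ⟨x₀⟩ := ‹Nonempty X›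
  have hy₀ : ((e x₀ : ℝ)) ∈ s := (e x₀).2
  -- the embedding into (0,1)
  set emb : X → ℝ := fun z => (Real.arctan (e z) + 2) / 4 with hembdef
  have hemb : Measurable emb := by
    have h1 : Measurable fun z : X => (e z : ℝ) := measurable_subtype_coe.comp e.measurable
    exact ((Real.continuous_arctan.measurable.comp h1).add measurable_const).div_const 4
  have hpi : (2:ℝ) > Real.pi / 2 := by
    have := Real.pi_lt_d2; linarith
  have hemb_pos : ∀ z, 0 < emb z := by
    intro z
    have := Real.neg_pi_div_two_lt_arctan (e z : ℝ)
    simp only [hembdef]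
    nlinarith
  have hemb_lt : ∀ z, emb z < 1 := by
    intro z
    have := Real.arctan_lt_pi_div_two (e z : ℝ)
    simp only [hembdef]
    nlinarith
  -- the left inverse
  have htan : Measurable Real.tan := by
    rw [show Real.tan = Real.sin / Real.cos from funext fun x => Real.tan_eq_sin_div_cos x]
    exact Real.measurable_sin.div Real.measurable_cos
  set q : ℝ → ℝ := fun y => if Real.tan (4 * y - 2) ∈ s then Real.tan (4 * y - 2) else (e x₀ : ℝ)
    with hqdef
  have hq : ∀ y, q y ∈ s := by
    intro y; simp only [hqdef]; split
    · assumption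
    · exact hy₀
  have hqm : Measurable q := by
    have h1 : Measurable fun y : ℝ => Real.tan (4 * y - 2) :=
      htan.comp ((measurable_const.mul measurable_id).sub measurable_const)
    exact Measurable.ite (h1 hs) h1 measurable_const
  set inv : ℝ → X := fun y => e.symm ⟨q y, hq y⟩ with hinvdef
  have hinvm : Measurable inv := e.symm.measurable.comp (hqm.subtype_mk)
  have hinv_emb : ∀ z, inv (emb z) = z := by
    intro z
    have harg : 4 * ((Real.arctan (e z : ℝ) + 2) / 4) - 2 = Real.arctan (e z : ℝ) := by ring
    have htanval : Real.tan (4 * emb z - 2) = (e z : ℝ) := by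
      simp only [hembdef]; rw [harg, Real.tan_arctan]
    have hqval : q (emb z) = (e z : ℝ) := by
      simp only [hqdef]; rw [htanval]; exact if_pos (e z).2
    have : (⟨q (emb z), hq _⟩ : s) = e z := Subtype.ext hqval
    simp only [hinvdef, this, MeasurableEquiv.symm_apply_apply]
  -- the cdf and quantile
  set ν' : Measure ℝ := Measure.map emb ν with hν'def
  have : IsProbabilityMeasure ν' := Measure.isProbabilityMeasure_map hemb.aemeasurable
  set F : StieltjesFunction ℝ := cdf ν' with hFdef
  have hF0 : ∀ x : ℝ, x ≤ 0 → F x = 0 := by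
    intro x hx
    have : ν' (Iic x) = 0 := by
      rw [hν'def, Measure.map_apply hemb measurableSet_Iic]
      have : emb ⁻¹' Iic x = ∅ := by
        ext z; simp only [mem_preimage, mem_Iic, mem_empty_iff_false, iff_false, not_le]
        exact lt_of_le_of_lt hx (hemb_pos z)
      rw [this]; simp
    rw [hFdef, cdf_eq_real, measureReal_def, this]; simp
  have hF1 : F 1 = 1 := by
    have : ν' (Iic 1) = 1 := by
      rw [hν'def, Measure.map_apply hemb measurableSet_Iic]
      have : emb ⁻¹' Iic 1 = univ := by
        ext z; simp only [mem_preimage, mem_Iic, mem_univ, iff_true]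
        exact (hemb_lt z).le
      rw [this]; simp
    rw [hFdef, cdf_eq_real, measureReal_def, this]; simp
  have hFmono : Monotone F := F.mono
  have hFnonneg : ∀ x, 0 ≤ F x := cdf_nonneg ν'
  have hFle1 : ∀ x, F x ≤ 1 := cdf_le_one ν'
  -- quantile
  set G : ℝ → ℝ := fun u => if u ≤ 0 then -1 else if 1 < u then 2 else sInf {x | u ≤ F x}
    with hGdef
  have hSne : ∀ u : ℝ, u ≤ 1 → (1:ℝ) ∈ {x | u ≤ F x} := by
    intro u hu; simpa [hF1] using hu
  have hSbdd : ∀ u : ℝ, 0 < u → (0:ℝ) ∈ lowerBounds {x | u ≤ F x} := by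
    intro u hu x hx
    by_contra hneg
    push_neg at hneg
    have : F x = 0 := hF0 x hneg.le
    simp only [mem_setOf_eq, this] at hx
    linarith
  have hG_eq : ∀ u : ℝ, 0 < u → u ≤ 1 → G u = sInf {x | u ≤ F x} := by
    intro u h1 h2
    simp only [hGdef]
    rw [if_neg (by linarith), if_neg (by linarith)]
  have hG_nonneg : ∀ u : ℝ, 0 < u → u ≤ 1 → 0 ≤ G u := by
    intro u h1 h2
    rw [hG_eq u h1 h2]
    exact le_csInf ⟨1, hSne u h2⟩ (hSbdd u h1)
  have hG_le_one : ∀ u : ℝ, 0 < u → u ≤ 1 → G u ≤ 1 := by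
    intro u h1 h2
    rw [hG_eq u h1 h2]
    exact csInf_le ⟨0, hSbdd u h1⟩ (hSne u h2)
  have hFG : ∀ u : ℝ, 0 < u → u ≤ 1 → u ≤ F (sInf {x | u ≤ F x}) := by
    intro u h1 h2
    set p := sInf {x | u ≤ F x} with hp
    have key : ∀ y ∈ Ioi p, u ≤ F y := by
      intro y hy
      obtain ⟨x, hxS, hxy⟩ := (csInf_lt_iff ⟨0, hSbdd u h1⟩ ⟨1, hSne u h2⟩).1 hy
      exact le_trans hxS (hFmono hxy.le)
    have hrc : ContinuousWithinAt F (Ioi p) p :=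
      (F.right_continuous p).mono Ioi_subset_Ici_self
    exact ge_of_tendsto hrc (eventually_nhdsWithin_of_forall key)
  have hG_iff : ∀ u ∈ Ioo (0:ℝ) 1, ∀ x : ℝ, G u ≤ x ↔ u ≤ F x := by
    rintro u ⟨hu0, hu1⟩ x
    rw [hG_eq u hu0 hu1.le]
    constructor
    · intro h
      exact le_trans (hFG u hu0 hu1.le) (hFmono h)
    · intro h
      exact csInf_le ⟨0, hSbdd u hu0⟩ h
  have hGmono : Monotone G := by
    intro u v huv
    simp only [hGdef]
    by_cases hu0 : u ≤ 0
    · rw [if_pos hu0]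
      by_cases hv0 : v ≤ 0
      · rw [if_pos hv0]
      · rw [if_neg hv0]
        push_neg at hv0
        by_cases hv1 : 1 < v
        · rw [if_pos hv1]; norm_num
        · rw [if_neg hv1]
          push_neg at hv1
          have := hG_nonneg v hv0 hv1
          rw [hG_eq v hv0 hv1] at this
          linarith
    · rw [if_neg hu0]
      push_neg at hu0
      have hv0 : ¬ v ≤ 0 := by linarith
      rw [if_neg hv0]
      by_cases hu1 : 1 < u
      · rw [if_pos hu1, if_pos (by linarith)]
      · rw [if_neg hu1]
        push_neg at hu1
        by_cases hv1 : 1 < v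
        · rw [if_pos hv1]
          have := hG_le_one u hu0 hu1
          rw [hG_eq u hu0 hu1] at this
          linarith
        · rw [if_neg hv1]
          push_neg at hv1
          exact csInf_le_csInf ⟨0, hSbdd u hu0⟩ ⟨1, hSne v hv1⟩
            (fun x hx => le_trans huv hx)
  have hGm : Measurable G := hGmono.measurable
  -- pushforward of Lebesgue by G is ν'
  have hmap : Measure.map G (volume.restrict (Set.Ioo 0 1)) = ν' := by
    refine Measure.ext_of_Iic _ _ (fun x => ?_)
    rw [Measure.map_apply hGm measurableSet_Iic,
      Measure.restrict_apply (hGm measurableSet_Iic)]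
    have hset : G ⁻¹' Iic x ∩ Ioo 0 1 = Iic (F x) ∩ Ioo 0 1 := by
      ext u
      simp only [mem_inter_iff, mem_preimage, mem_Iic, and_congr_left_iff]
      intro hu
      exact hG_iff u hu x
    rw [hset]
    have hof : ν' (Iic x) = ENNReal.ofReal (F x) := (ofReal_cdf ν' x).symm
    rw [hof]
    rcases lt_or_eq_of_le (hFle1 x) with h | h
    · have : Iic (F x) ∩ Ioo 0 1 = Ioc 0 (F x) := by
        ext u
        simp only [mem_inter_iff, mem_Iic, mem_Ioo, mem_Ioc]
        constructor
        · rintro ⟨h1, h2, h3⟩; exact ⟨h2, h1⟩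
        · rintro ⟨h1, h2⟩; exact ⟨h2, h1, lt_of_le_of_lt h2 h⟩
      rw [this, Real.volume_Ioc, sub_zero]
    · have : Iic (F x) ∩ Ioo 0 1 = Ioo 0 1 := by
        ext u
        simp only [mem_inter_iff, mem_Iic, mem_Ioo]
        constructor
        · rintro ⟨_, h2⟩; exact h2
        · rintro ⟨h1, h2⟩; exact ⟨by rw [h]; linarith, h1, h2⟩
      rw [this, Real.volume_Ioo, sub_zero, h]
  -- assemble
  refine ⟨inv ∘ G, hinvm.comp hGm, ?_⟩
  rw [← Measure.map_map hinvm hGm, hmap, hν'def, Measure.map_map hinvm hemb]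
  have : inv ∘ emb = id := funext hinv_emb
  rw [this, Measure.map_id]

end Aux

/-- The correspondence `α ↦ μ_α` is surjective onto the set
of positive finite Borel measures on `P^{d-1}`: for every positive finite
Borel measure `μ` on `P^{d-1}` there is an absolutely continuous curve
`α : [0,1] → ℝ^d` with `μ_α = μ`. -/
theorem stmt17 {d : ℕ} (hd : 1 ≤ d) (μ : Measure (Proj d))
    (hfin : IsFiniteMeasure μ) :
    ∃ α g : ℝ → Euc d, IsACDeriv α g ∧ IsCurveMeasure g μ := by
  classical
  by_cases hc0 : μ Set.univ = 0
  · -- zero measure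
    have hμ : μ = 0 := Measure.measure_univ_eq_zero.mp hc0
    refine ⟨fun _ => 0, fun _ => 0, ⟨intervalIntegrable_const, fun t ht => by simp⟩, hfin,
      fun f hf => ?_⟩
    rw [hμ]
    simp [hext]
  · -- positive measure
    have hcT : μ Set.univ ≠ ⊤ := measure_ne_top μ _
    set c : ℝ≥0∞ := μ Set.univ with hcdef
    set r : ℝ := c.toReal with hrdef
    have hr : 0 < r := ENNReal.toReal_pos hc0 hcT
    have hne : Nonempty (Sph d) :=
      ⟨⟨EuclideanSpace.single ⟨0, hd⟩ 1, by simp [EuclideanSpace.norm_single]⟩⟩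
    set μp : Measure (Proj d) := c⁻¹ • μ with hμpdef
    have hμp : IsProbabilityMeasure μp :=
      ⟨by simp [hμpdef, Measure.smul_apply, smul_eq_mul, ENNReal.inv_mul_cancel hc0 hcT]; exact ENNReal.inv_mul_cancel hc0 hcT⟩
    set ν : Measure (Sph d) := Measure.map secP μp with hνdef
    have hν : IsProbabilityMeasure ν := Measure.isProbabilityMeasure_map measurable_secP.aemeasurable
    obtain ⟨φ, hφm, hφmap⟩ := exists_push (Sph d) ν
    have hφcoe : Measurable fun t => (φ t : Euc d) := measurable_subtype_coe.comp hφm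
    set g : ℝ → Euc d := fun t => r • (φ t : Euc d) with hgdef
    have hnormφ : ∀ t, ‖(φ t : Euc d)‖ = 1 := fun t => by
      have := (φ t).2
      simpa [mem_sphere_iff_norm] using this
    have hnormg : ∀ t, ‖g t‖ = r := by
      intro t
      rw [hgdef]
      simp only [norm_smul, Real.norm_eq_abs, abs_of_pos hr, hnormφ t, mul_one]
    have hgne : ∀ t, g t ≠ 0 := by
      intro t h
      have := hnormg t
      rw [h, norm_zero] at this
      exact hr.ne this
    have hgm : Measurable g := hφcoe.const_smul r
    -- absolute continuity
    have hgint : IntervalIntegrable g volume 0 1 := by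
      rw [intervalIntegrable_iff, Set.uIoc_of_le zero_le_one]
      haveI : IsFiniteMeasure (volume.restrict (Set.Ioc (0:ℝ) 1)) :=
        ⟨by rw [Measure.restrict_apply_univ]; exact measure_Ioc_lt_top⟩
      refine (integrable_const r).mono' hgm.aestronglyMeasurable ?_
      filter_upwards with t
      rw [hnormg t]
    refine ⟨fun t => ∫ s in (0:ℝ)..t, g s, g, ⟨hgint, fun t ht => by simp⟩, hfin, fun f hf => ?_⟩
    -- the key identity
    have hcont : Continuous (projQ (d := d)) := continuous_quotient_mk'
    have hF0 : Continuous fun z : Sph d => r * f (projQ z) :=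
      continuous_const.mul (hf.comp hcont)
    have hext_eq : ∀ t : ℝ, hext f (g t) = r * f (projQ (φ t)) := by
      intro t
      rw [hext, dif_neg (hgne t), hnormg t]
      have hu : unitize (g t) (hgne t) = φ t := by
        refine Subtype.ext ?_
        show ‖g t‖⁻¹ • g t = (φ t : Euc d)
        rw [hnormg t, hgdef]
        simp only [smul_smul, inv_mul_cancel₀ hr.ne', one_smul]
      rw [hu]
    calc ∫ x, f x ∂μ = r * ∫ x, f x ∂μp := by
          rw [hμpdef, integral_smul_measure, ENNReal.toReal_inv, ← hrdef, smul_eq_mul,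
            ← mul_assoc, mul_inv_cancel₀ hr.ne', one_mul]
      _ = ∫ p, r * f p ∂μp := by rw [integral_const_mul]
      _ = ∫ z, r * f (projQ z) ∂ν := by
          rw [hνdef, integral_map measurable_secP.aemeasurable hF0.aestronglyMeasurable]
          simp only [projQ_secP]
      _ = ∫ z, r * f (projQ z) ∂(Measure.map φ (volume.restrict (Set.Ioo 0 1))) := by
          rw [hφmap]
      _ = ∫ t in Set.Ioo (0:ℝ) 1, r * f (projQ (φ t)) := by
          rw [integral_map hφm.aemeasurable hF0.aestronglyMeasurable]
      _ = ∫ t in Set.Ioc (0:ℝ) 1, r * f (projQ (φ t)) := by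
          rw [Measure.restrict_congr_set Ioo_ae_eq_Ioc]
      _ = ∫ t in (0:ℝ)..1, hext f (g t) := by
          rw [intervalIntegral.integral_of_le zero_le_one]
          exact integral_congr_ae (Filter.Eventually.of_forall fun t => (hext_eq t).symm)
end
end

section
/- Let E ⊆ [0,1] be a Lebesgue measurable set. There exists a strictly monotonic (increasing), right-continuous function φ:[0,1]→[0,1] such that for almost every s ∈ [0,1], φ is differentiable at s and χ_E(φ(s))·φ'(s) = λ(E), where λ is Lebesgue measure and χ_E is the indicator function of E. -/
open MeasureTheory Set Filter Topology

noncomputable section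

namespace Stmt18Aux

open Filter Topology

variable (E : Set ℝ)

/-- The normalized restriction of Lebesgue measure to `E`. -/
def mu : Measure ℝ := (volume E)⁻¹ • volume.restrict E

/-- The cumulative distribution function of `mu E`. -/
def psi : StieltjesFunction ℝ := ProbabilityTheory.cdf (mu E)

/-- The (upper) quantile function of `mu E`. -/
def phi (s : ℝ) : ℝ := sSup {t ∈ Icc (0:ℝ) 1 | psi E t ≤ s}

variable {E}

section Basic

variable (hmeas : MeasurableSet E) (hsub : E ⊆ Icc 0 1) (hE : volume E ≠ 0)

include hsub in
lemma vol_ne_top : volume E ≠ ⊤ := by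
  refine ne_top_of_le_ne_top ?_ (measure_mono hsub)
  simp [Real.volume_Icc]

include hsub hE in
lemma isProb : IsProbabilityMeasure (mu E) := by
  constructor
  rw [mu, Measure.smul_apply, Measure.restrict_apply_univ, smul_eq_mul,
    ENNReal.inv_mul_cancel hE (vol_ne_top hsub)]

include hsub hE in
lemma psi_eq (x : ℝ) : psi E x = ((mu E) (Iic x)).toReal := by
  have := isProb hsub hE
  exact ProbabilityTheory.cdf_eq_real _ _

lemma mu_apply {s : Set ℝ} (hs : MeasurableSet s) :
    mu E s = (volume E)⁻¹ * volume (s ∩ E) := by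
  rw [mu, Measure.smul_apply, Measure.restrict_apply hs, smul_eq_mul]

include hsub hE in
lemma mu_ne_top {s : Set ℝ} : mu E s ≠ ⊤ := by
  have := isProb hsub hE
  exact (measure_lt_top _ _).ne

include hsub hE in
lemma psi_sub {a b : ℝ} (hab : a ≤ b) :
    psi E b - psi E a = (mu E (Ioc a b)).toReal := by
  have h : mu E (Iic b) = mu E (Iic a) + mu E (Ioc a b) := by
    rw [← measure_union (Iic_disjoint_Ioc le_rfl) measurableSet_Ioc,
      Iic_union_Ioc_eq_Iic hab]
  rw [psi_eq hsub hE, psi_eq hsub hE, h,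
    ENNReal.toReal_add (mu_ne_top hsub hE) (mu_ne_top hsub hE)]
  ring

include hsub hE in
lemma psi_cont : Continuous (psi E) := by
  have hk : (volume E)⁻¹ ≠ ⊤ := by simpa using hE
  refine LipschitzWith.continuous
    (K := ((volume E)⁻¹).toNNReal) (LipschitzWith.of_dist_le_mul fun x y => ?_)
  wlog h : y ≤ x generalizing x y
  · rw [dist_comm, dist_comm x y]; exact this y x (le_of_not_ge h)
  have h1 : psi E y ≤ psi E x := (psi E).mono h
  rw [Real.dist_eq, Real.dist_eq, abs_of_nonneg (by linarith),
    abs_of_nonneg (by linarith)]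
  rw [psi_sub hsub hE h]
  have h2 : mu E (Ioc y x) ≤ (volume E)⁻¹ * ENNReal.ofReal (x - y) := by
    rw [mu_apply measurableSet_Ioc]
    refine mul_le_mul_right ?_ _
    refine le_trans (measure_mono inter_subset_left) ?_
    rw [Real.volume_Ioc]
  calc (mu E (Ioc y x)).toReal
      ≤ ((volume E)⁻¹ * ENNReal.ofReal (x - y)).toReal := by
        refine ENNReal.toReal_mono ?_ h2
        exact ENNReal.mul_ne_top hk ENNReal.ofReal_ne_top
    _ = ((volume E)⁻¹).toNNReal * (x - y) := by
        rw [ENNReal.toReal_mul, ENNReal.toReal_ofReal (by linarith)]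
        rfl

include hsub hE in
lemma psi_zero : psi E 0 = 0 := by
  rw [psi_eq hsub hE, mu_apply measurableSet_Iic]
  have : volume (Iic (0:ℝ) ∩ E) = 0 := by
    refine measure_mono_null ?_ (Real.volume_singleton (a := (0:ℝ)))
    rintro t ⟨ht1, ht2⟩
    exact le_antisymm ht1 (hsub ht2).1
  simp [this]

include hmeas hsub hE in
lemma psi_one : psi E 1 = 1 := by
  rw [psi_eq hsub hE, mu_apply measurableSet_Iic]
  have : Iic (1:ℝ) ∩ E = E := by
    refine inter_eq_self_of_subset_right fun t ht => (hsub ht).2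
  rw [this, ENNReal.inv_mul_cancel hE (vol_ne_top hsub)]
  simp

lemma psi_nonneg (x : ℝ) : 0 ≤ psi E x := ProbabilityTheory.cdf_nonneg _ _

lemma psi_le_one (x : ℝ) : psi E x ≤ 1 := ProbabilityTheory.cdf_le_one _ _

end Basic

section Phi

variable (hmeas : MeasurableSet E) (hsub : E ⊆ Icc 0 1) (hE : volume E ≠ 0)

lemma bddA (s : ℝ) : BddAbove {t ∈ Icc (0:ℝ) 1 | psi E t ≤ s} :=
  ⟨1, fun t ht => ht.1.2⟩

include hsub hE in
lemma zero_memA {s : ℝ} (hs : 0 ≤ s) : (0:ℝ) ∈ {t ∈ Icc (0:ℝ) 1 | psi E t ≤ s} :=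
  ⟨⟨le_rfl, zero_le_one⟩, by rw [psi_zero hsub hE]; exact hs⟩

include hsub hE in
lemma phi_mem {s : ℝ} (hs : 0 ≤ s) : phi E s ∈ Icc (0:ℝ) 1 :=
  ⟨le_csSup (bddA s) (zero_memA hsub hE hs), csSup_le ⟨0, zero_memA hsub hE hs⟩
    fun t ht => ht.1.2⟩

lemma phi_nonneg (s : ℝ) : 0 ≤ phi E s := by
  rcases Set.eq_empty_or_nonempty {t ∈ Icc (0:ℝ) 1 | psi E t ≤ s} with h | h
  · rw [phi, h, Real.sSup_empty]
  · obtain ⟨t, ht⟩ := h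
    exact le_trans ht.1.1 (le_csSup (bddA s) ht)

lemma phi_mono : Monotone (phi E) := by
  intro s s' hss'
  rcases Set.eq_empty_or_nonempty {t ∈ Icc (0:ℝ) 1 | psi E t ≤ s} with h | h
  · rw [phi, h, Real.sSup_empty]; exact phi_nonneg s'
  · exact csSup_le_csSup (bddA s') h fun t ht => ⟨ht.1, ht.2.trans hss'⟩

include hmeas hsub hE in
lemma psi_phi {s : ℝ} (hs : s ∈ Icc (0:ℝ) 1) : psi E (phi E s) = s := by
  have hne : {t ∈ Icc (0:ℝ) 1 | psi E t ≤ s}.Nonempty := ⟨0, zero_memA hsub hE hs.1⟩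
  have hle : psi E (phi E s) ≤ s := by
    rw [phi, Monotone.map_csSup_of_continuousAt ((psi_cont hsub hE).continuousAt)
      (psi E).mono hne (bddA s)]
    exact csSup_le (hne.image _) (by rintro x ⟨t, ht, rfl⟩; exact ht.2)
  refine le_antisymm hle ?_
  by_contra hlt
  push_neg at hlt
  have hphi1 : phi E s < 1 := by
    rcases lt_or_eq_of_le (phi_mem hsub hE hs.1).2 with h | h
    · exact h
    · rw [h, psi_one hmeas hsub hE] at hlt; exact absurd hs.2 (not_le.2 hlt)
  -- by continuity, pick u slightly to the right with psi E u < s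
  have hopen : IsOpen {u : ℝ | psi E u < s} :=
    isOpen_lt (psi_cont hsub hE) continuous_const
  obtain ⟨ε, hε, hball⟩ := Metric.isOpen_iff.1 hopen _ hlt
  set u := min 1 (phi E s + ε / 2) with hu
  have hu1 : u ≤ 1 := min_le_left _ _
  have hugt : phi E s < u := lt_min hphi1 (by linarith)
  have huball : u ∈ Metric.ball (phi E s) ε := by
    rw [Metric.mem_ball, Real.dist_eq, abs_of_pos (by linarith)]
    have : u ≤ phi E s + ε / 2 := min_le_right _ _
    linarith
  have humem : u ∈ {t ∈ Icc (0:ℝ) 1 | psi E t ≤ s} :=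
    ⟨⟨le_trans (phi_nonneg s) hugt.le, hu1⟩, (hball huball).le⟩
  exact absurd (le_csSup (bddA s) humem) (not_le.2 hugt)

include hmeas hsub hE in
lemma phi_strictMono : StrictMonoOn (phi E) (Icc 0 1) := by
  intro s1 hs1 s2 hs2 h12
  by_contra h
  push_neg at h
  have := (psi E).mono h
  rw [psi_phi hmeas hsub hE hs1, psi_phi hmeas hsub hE hs2] at this
  exact absurd this (not_le.2 h12)

include hmeas hsub hE in
lemma phi_le_of_lt_psi {s x : ℝ} (hs : 0 ≤ s) (h : s < psi E x) : phi E s ≤ x := by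
  refine csSup_le ⟨0, zero_memA hsub hE hs⟩ fun t ht => ?_
  by_contra hxt
  push_neg at hxt
  exact absurd (le_trans ((psi E).mono hxt.le) ht.2) (not_le.2 h)

include hmeas hsub hE in
lemma le_psi_of_phi_le {s x : ℝ} (hs : s ∈ Icc (0:ℝ) 1) (h : phi E s ≤ x) :
    s ≤ psi E x := by
  rw [← psi_phi hmeas hsub hE hs]
  exact (psi E).mono h

include hmeas hsub hE in
lemma phi_of_one_le {s : ℝ} (hs : 1 ≤ s) : phi E s = 1 := by
  have : {t ∈ Icc (0:ℝ) 1 | psi E t ≤ s} = Icc 0 1 := by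
    ext t
    exact ⟨fun h => h.1, fun h => ⟨h, le_trans (psi_le_one t) hs⟩⟩
  rw [phi, this, csSup_Icc zero_le_one]

include hmeas hsub hE in
lemma phi_rightCont : ∀ s ∈ Icc (0:ℝ) 1, ContinuousWithinAt (phi E) (Ici s) s := by
  intro s hs
  rw [← continuousWithinAt_Ioi_iff_Ici]
  have htend := (phi_mono (E := E)).tendsto_nhdsGT s
  suffices h : sInf (phi E '' Ioi s) = phi E s by rwa [h] at htend
  have hne : (phi E '' Ioi s).Nonempty := ⟨phi E (s+1), ⟨s+1, by simp, rfl⟩⟩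
  have hbdd : BddBelow (phi E '' Ioi s) := by
    refine ⟨phi E s, ?_⟩
    rintro x ⟨u, hu, rfl⟩
    exact phi_mono (le_of_lt hu)
  refine le_antisymm ?_ (le_csInf hne (by rintro x ⟨u, hu, rfl⟩; exact phi_mono hu.le))
  -- show sInf (phi '' Ioi s) ∈ A s, hence ≤ sSup (A s) = phi s
  set L := sInf (phi E '' Ioi s) with hL
  have hL0 : 0 ≤ L := le_csInf hne (by rintro x ⟨u, hu, rfl⟩; exact phi_nonneg u)
  have hL1 : L ≤ 1 := by
    refine le_trans (csInf_le hbdd ⟨s + 1, by simp, rfl⟩) ?_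
    exact (phi_mem hsub hE (by linarith [hs.1])).2
  have hpsiL : psi E L ≤ s := by
    rcases eq_or_lt_of_le hs.2 with h1 | h1
    · -- s = 1
      calc psi E L ≤ psi E 1 := (psi E).mono hL1
        _ = 1 := psi_one hmeas hsub hE
        _ = s := h1.symm ▸ rfl
    · by_contra hc
      push_neg at hc
      set u := min 1 ((s + psi E L) / 2) with hu
      have hus : s < u := lt_min h1 (by linarith)
      have hu1 : u ≤ 1 := min_le_left _ _
      have hLphiu : L ≤ phi E u := csInf_le hbdd ⟨u, hus, rfl⟩
      have hkey : psi E L ≤ u := by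
        calc psi E L ≤ psi E (phi E u) := (psi E).mono hLphiu
          _ = u := psi_phi hmeas hsub hE ⟨by linarith [hs.1], hu1⟩
      have hpsiL1 : psi E L ≤ 1 := psi_le_one L
      rcases le_total ((s + psi E L) / 2) 1 with h' | h'
      · have : u = (s + psi E L) / 2 := min_eq_right h'
        rw [this] at hkey; linarith
      · have : u = 1 := min_eq_left h'
        linarith
  exact le_csSup (bddA s) ⟨⟨hL0, hL1⟩, hpsiL⟩

include hmeas hsub hE in
lemma map_phi : Measure.map (phi E) (volume.restrict (Ioo 0 1)) = mu E := by
  have hprob := isProb hsub hE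
  have hphim : Measurable (phi E) := (phi_mono (E := E)).measurable
  refine Measure.ext_of_Iic _ _ fun x => ?_
  rw [Measure.map_apply hphim measurableSet_Iic,
    Measure.restrict_apply (hphim measurableSet_Iic)]
  have hpsix1 : psi E x ≤ 1 := psi_le_one x
  have hsub1 : Ioo (0:ℝ) (psi E x) ⊆ (phi E ⁻¹' Iic x) ∩ Ioo 0 1 := by
    intro s hs
    exact ⟨phi_le_of_lt_psi hmeas hsub hE hs.1.le hs.2, hs.1, lt_of_lt_of_le hs.2 hpsix1⟩
  have hsub2 : (phi E ⁻¹' Iic x) ∩ Ioo 0 1 ⊆ Ioc 0 (psi E x) := by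
    rintro s ⟨h1, h2, h3⟩
    exact ⟨h2, le_psi_of_phi_le hmeas hsub hE ⟨h2.le, h3.le⟩ h1⟩
  have h1 := measure_mono (μ := volume) hsub1
  have h2 := measure_mono (μ := volume) hsub2
  rw [Real.volume_Ioo] at h1
  rw [Real.volume_Ioc] at h2
  have hvol : volume ((phi E ⁻¹' Iic x) ∩ Ioo 0 1) = ENNReal.ofReal (psi E x) := by
    simpa using le_antisymm (by simpa using h2) (by simpa using h1)
  rw [hvol, psi_eq hsub hE, ENNReal.ofReal_toReal (mu_ne_top hsub hE)]

include hmeas hsub hE in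
lemma null_preimage {N : Set ℝ} (hN : MeasurableSet N) (h0 : volume (N ∩ E) = 0) :
    volume ((phi E ⁻¹' N) ∩ Ioo 0 1) = 0 := by
  have hphim : Measurable (phi E) := (phi_mono (E := E)).measurable
  rw [← Measure.restrict_apply (hphim hN), ← Measure.map_apply hphim hN,
    map_phi hmeas hsub hE, mu_apply hN, h0, mul_zero]

end Phi

end Stmt18Aux

/-- Let `E ⊆ [0,1]` be a Lebesgue measurable set.  There
exists a strictly monotonic (increasing), right-continuous function
`φ : [0,1] → [0,1]` such that for almost every `s ∈ [0,1]`, `φ` is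
differentiable at `s` and `χ_E(φ(s)) ⋅ φ'(s) = λ(E)`. -/
theorem stmt18 (E : Set ℝ) (hmeas : MeasurableSet E) (hsub : E ⊆ Icc 0 1) :
    ∃ φ : ℝ → ℝ,
      StrictMonoOn φ (Icc 0 1) ∧
      MapsTo φ (Icc 0 1) (Icc 0 1) ∧
      (∀ s ∈ Icc (0:ℝ) 1, ContinuousWithinAt φ (Ici s) s) ∧
      ∀ᵐ s ∂volume.restrict (Icc (0:ℝ) 1),
        ∃ D : ℝ, HasDerivAt φ D s ∧
          E.indicator (fun _ => (1:ℝ)) (φ s) * D = (volume E).toReal := by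
  open Stmt18Aux in
  rcases eq_or_ne (volume E) 0 with h0 | hE
  · -- null case: the identity works
    refine ⟨id, fun a _ b _ h => h, fun s hs => hs, fun s _ => continuousWithinAt_id, ?_⟩
    have hae : ∀ᵐ s ∂volume, s ∉ E := by
      rw [ae_iff]
      simpa using h0
    filter_upwards [ae_restrict_of_ae hae] with s hs
    refine ⟨1, hasDerivAt_id s, ?_⟩
    simp [indicator_of_notMem hs, h0]
  · -- main case
    have hprob := isProb hsub hE
    have htop : volume E ≠ ⊤ := vol_ne_top hsub
    set c : ℝ := (volume E).toReal with hc
    have hcpos : 0 < c := ENNReal.toReal_pos hE htop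
    refine ⟨phi E, phi_strictMono hmeas hsub hE,
      fun s hs => phi_mem hsub hE hs.1, phi_rightCont hmeas hsub hE, ?_⟩
    -- a.e. derivative of psi on E
    haveI : IsFiniteMeasure (volume.restrict E) := by
      constructor
      rw [Measure.restrict_apply_univ]
      exact htop.lt_top
    have h1 : (mu E).rnDeriv volume =ᵐ[volume]
        (volume E)⁻¹ • (volume.restrict E).rnDeriv volume :=
      Measure.rnDeriv_smul_left_of_ne_top (volume.restrict E) volume (by simpa using hE)
    have h2 : (volume.restrict E).rnDeriv volume =ᵐ[volume] E.indicator 1 :=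
      Measure.rnDeriv_restrict_self volume hmeas
    have hmcdf : (psi E).measure = mu E := ProbabilityTheory.measure_cdf (mu E)
    have hder := (psi E).ae_hasDerivAt
    rw [hmcdf] at hder
    have hae1 : ∀ᵐ t ∂volume, t ∈ E → HasDerivAt (psi E) c⁻¹ t := by
      filter_upwards [hder, h1, h2] with t ht h1t h2t htE
      rw [h1t, Pi.smul_apply, h2t, indicator_of_mem htE, Pi.one_apply, smul_eq_mul,
        mul_one, ENNReal.toReal_inv] at ht
      exact ht
    -- measurable null superset of the bad set for psi
    obtain ⟨N, hSN, hNmeas, hN0⟩ := exists_measurable_superset_of_null (by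
      rw [← ae_iff] at *; exact hae1 :
        volume {t | ¬ (t ∈ E → HasDerivAt (psi E) c⁻¹ t)} = 0)
    have hB1 : volume ((phi E ⁻¹' N) ∩ Ioo 0 1) = 0 :=
      null_preimage hmeas hsub hE hNmeas (measure_mono_null inter_subset_left hN0)
    have hB2 : volume ((phi E ⁻¹' Eᶜ) ∩ Ioo 0 1) = 0 :=
      null_preimage hmeas hsub hE hmeas.compl (by simp)
    have hdiff : ∀ᵐ s ∂volume, DifferentiableAt ℝ (phi E) s :=
      (phi_mono (E := E)).ae_differentiableAt
    have key : ∀ᵐ s ∂volume, s ∈ Ioo (0:ℝ) 1 →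
        ∃ D : ℝ, HasDerivAt (phi E) D s ∧
          E.indicator (fun _ => (1:ℝ)) (phi E s) * D = c := by
      have hB1' : ∀ᵐ s ∂volume, s ∉ (phi E ⁻¹' N) ∩ Ioo 0 1 := by
        rw [ae_iff]; simpa only [not_not, setOf_mem_eq] using hB1
      have hB2' : ∀ᵐ s ∂volume, s ∉ (phi E ⁻¹' Eᶜ) ∩ Ioo 0 1 := by
        rw [ae_iff]; simpa only [not_not, setOf_mem_eq] using hB2
      filter_upwards [hB1', hB2', hdiff] with s hs1 hs2 hsdiff hsIoo
      have hphiE : phi E s ∈ E := by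
        by_contra hc'
        exact hs2 ⟨hc', hsIoo⟩
      have hphiN : phi E s ∉ N := fun hc' => hs1 ⟨hc', hsIoo⟩
      have hpsider : HasDerivAt (psi E) c⁻¹ (phi E s) := by
        by_contra hc'
        exact hphiN (hSN fun h => absurd (h hphiE) hc')
      have hD : HasDerivAt (phi E) (deriv (phi E) s) s := hsdiff.hasDerivAt
      have hcomp : HasDerivAt (⇑(psi E) ∘ phi E) (c⁻¹ * deriv (phi E) s) s :=
        hpsider.comp s hD
      have hev : (⇑(psi E) ∘ phi E) =ᶠ[𝓝 s] id := by
        filter_upwards [isOpen_Ioo.mem_nhds hsIoo] with u hu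
        exact psi_phi hmeas hsub hE ⟨hu.1.le, hu.2.le⟩
      have hone : HasDerivAt (⇑(psi E) ∘ phi E) 1 s :=
        (hasDerivAt_id s).congr_of_eventuallyEq hev
      have huniq : c⁻¹ * deriv (phi E) s = 1 := hcomp.unique hone
      have hDc : deriv (phi E) s = c := by
        field_simp at huniq
        linarith
      refine ⟨deriv (phi E) s, hD, ?_⟩
      rw [indicator_of_mem hphiE, one_mul, hDc]
    rw [← Measure.restrict_congr_set (Ioo_ae_eq_Icc (μ := volume) (a := (0:ℝ)) (b := 1))]
    rw [ae_restrict_iff' measurableSet_Ioo]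
    exact key
end
end
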